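/- For every domain D and n ≥ 2, the power monoid 𝒫_fin(ℕ₀) is isomorphic to a submonoid of the monoid of nonzero ideals of R = D[X₁,…,Xₙ] under ideal multiplication. Concretely, the map sending A = {m₁ < m₂ < … < m_ℓ} ⊆ ℕ₀ to the ideal I_A = ⟨X₁^{m_ℓ−m₁}X₂^{m₁}, X₁^{m_ℓ−m₂}X₂^{m₂}, …, X₁^{m_ℓ−m_{ℓ−1}}X₂^{m_{ℓ−1}}, X₂^{m_ℓ}⟩ is an injective monoid homomorphism: I_{A+B} = I_A · I_B and I_{{0}} = R. -/

import Mathlib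

open MvPolynomial
open scoped Pointwise

/-- The ideal `I_A` of `R = D[X₁,…,Xₙ]` associated to a finite set `A ⊆ ℕ₀`:
generated by the monomials `X₁^(max A − m) X₂^m` for `m ∈ A`. -/
noncomputable def idealOfFinset {D : Type*} [CommRing D] {n : ℕ} (hn : 2 ≤ n)
    (A : Finset ℕ) : Ideal (MvPolynomial (Fin n) D) :=
  Ideal.span {p | ∃ m ∈ A,
    p = (X (⟨0, by omega⟩ : Fin n) : MvPolynomial (Fin n) D) ^ (A.sup id - m)
      * X ⟨1, by omega⟩ ^ m}

section Aux

variable {D : Type*} [CommRing D] {n : ℕ}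

lemma gen_eq_monomial' (i0 i1 : Fin n) (a b : ℕ) :
    (X i0 : MvPolynomial (Fin n) D) ^ a * X i1 ^ b
    = monomial (Finsupp.single i0 a + Finsupp.single i1 b) 1 := by
  rw [X_pow_eq_monomial, X_pow_eq_monomial, monomial_mul, one_mul]

lemma idealOfFinset_eq_span_monomial (hn : 2 ≤ n) (A : Finset ℕ) :
    idealOfFinset (D := D) hn A =
      Ideal.span ((fun e => monomial e (1 : D)) ''
        {e | ∃ m ∈ A, e = Finsupp.single (⟨0, by omega⟩ : Fin n) (A.sup id - m)
          + Finsupp.single (⟨1, by omega⟩ : Fin n) m}) := by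
  unfold idealOfFinset
  congr 1
  ext p
  constructor
  · rintro ⟨m, hm, rfl⟩
    exact ⟨_, ⟨m, hm, rfl⟩, (gen_eq_monomial' _ _ _ _).symm⟩
  · rintro ⟨e, ⟨m, hm, rfl⟩, rfl⟩
    exact ⟨m, hm, (gen_eq_monomial' _ _ _ _).symm⟩

lemma sumset_sup (A B : Finset ℕ) (hA : A.Nonempty) (hB : B.Nonempty) :
    (A + B).sup id = A.sup id + B.sup id := by
  apply le_antisymm
  · apply Finset.sup_le
    intro m hm
    rw [Finset.mem_add] at hm
    obtain ⟨a, ha, b, hb, rfl⟩ := hm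
    exact add_le_add (Finset.le_sup (f := id) ha) (Finset.le_sup (f := id) hb)
  · obtain ⟨a, ha, hsa⟩ := Finset.exists_mem_eq_sup A hA id
    obtain ⟨b, hb, hsb⟩ := Finset.exists_mem_eq_sup B hB id
    rw [hsa, hsb]
    exact Finset.le_sup (f := id) (Finset.add_mem_add ha hb)

lemma gen_mul (i0 i1 : Fin n) {a b : ℕ} {A B : Finset ℕ} (hA : A.Nonempty) (hB : B.Nonempty)
    (ha : a ∈ A) (hb : b ∈ B) :
    (X i0 : MvPolynomial (Fin n) D) ^ (A.sup id - a) * X i1 ^ a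
      * (X i0 ^ (B.sup id - b) * X i1 ^ b)
    = X i0 ^ ((A + B).sup id - (a + b)) * X i1 ^ (a + b) := by
  have h1 : a ≤ A.sup id := Finset.le_sup (f := id) ha
  have h2 : b ≤ B.sup id := Finset.le_sup (f := id) hb
  rw [sumset_sup A B hA hB]
  have : A.sup id + B.sup id - (a + b) = (A.sup id - a) + (B.sup id - b) := by omega
  rw [this, pow_add, pow_add]
  ring

lemma span_mono_dominate [Nontrivial D] {i0 i1 : Fin n} (hne : i0 ≠ i1)
    {sA sB : ℕ} {A B : Finset ℕ}
    (h : Ideal.span ((fun e => monomial e (1 : D)) ''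
          {e | ∃ m ∈ A, e = Finsupp.single i0 (sA - m) + Finsupp.single i1 m})
       = Ideal.span ((fun e => monomial e (1 : D)) ''
          {e | ∃ m ∈ B, e = Finsupp.single i0 (sB - m) + Finsupp.single i1 m})) :
    ∀ m ∈ B, ∃ m' ∈ A, sA - m' ≤ sB - m ∧ m' ≤ m := by
  classical
  intro m hm
  have hmono : (monomial (Finsupp.single i0 (sB - m) + Finsupp.single i1 m) (1 : D))
      ∈ Ideal.span ((fun e => monomial e (1 : D)) ''
          {e | ∃ m ∈ A, e = Finsupp.single i0 (sA - m) + Finsupp.single i1 m}) := by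
    rw [h]
    exact Ideal.subset_span ⟨_, ⟨m, hm, rfl⟩, rfl⟩
  rw [mem_ideal_span_monomial_image] at hmono
  have hsupp : (monomial (Finsupp.single i0 (sB - m) + Finsupp.single i1 m) (1 : D)).support
      = {Finsupp.single i0 (sB - m) + Finsupp.single i1 m} := by
    rw [support_monomial, if_neg one_ne_zero]
  obtain ⟨si, ⟨m', hm', rfl⟩, hle⟩ := hmono _ (by rw [hsupp]; exact Finset.mem_singleton_self _)
  refine ⟨m', hm', ?_, ?_⟩
  · have := Finsupp.le_def.mp hle i0
    simpa [Finsupp.add_apply, Finsupp.single_eq_same, Finsupp.single_eq_of_ne' (Ne.symm hne)]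
      using this
  · have := Finsupp.le_def.mp hle i1
    simpa [Finsupp.add_apply, Finsupp.single_eq_same, Finsupp.single_eq_of_ne' hne]
      using this

end Aux

/-- The power monoid `𝒫_fin(ℕ₀)` embeds into the monoid of nonzero ideals of
`R = D[X₁,…,Xₙ]` (`n ≥ 2`): the map `A ↦ I_A` sends sumsets to ideal products, sends
`{0}` to the unit ideal, and is injective on finite nonempty subsets of `ℕ₀`. -/
theorem powerMonoid_embeds {D : Type*} [CommRing D] [IsDomain D] {n : ℕ} (hn : 2 ≤ n) :
    (∀ A B : Finset ℕ, A.Nonempty → B.Nonempty →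
      idealOfFinset (D := D) hn (A + B) = idealOfFinset (D := D) hn A * idealOfFinset (D := D) hn B) ∧
    (idealOfFinset (D := D) hn {0} = ⊤) ∧
    (∀ A B : Finset ℕ, A.Nonempty → B.Nonempty →
      idealOfFinset (D := D) hn A = idealOfFinset (D := D) hn B → A = B) := by
  have hne : (⟨0, by omega⟩ : Fin n) ≠ ⟨1, by omega⟩ := by simp [Fin.ext_iff]
  refine ⟨?_, ?_, ?_⟩
  · intro A B hA hB
    unfold idealOfFinset
    rw [Ideal.span_mul_span']
    congr 1
    ext p
    constructor
    · rintro ⟨m, hm, rfl⟩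
      rw [Finset.mem_add] at hm
      obtain ⟨a, ha, b, hb, rfl⟩ := hm
      exact ⟨_, ⟨a, ha, rfl⟩, _, ⟨b, hb, rfl⟩, gen_mul _ _ hA hB ha hb⟩
    · rintro ⟨x, ⟨a, ha, rfl⟩, y, ⟨b, hb, rfl⟩, rfl⟩
      refine ⟨a + b, Finset.add_mem_add ha hb, ?_⟩
      exact gen_mul (D := D) _ _ hA hB ha hb
  · rw [Ideal.eq_top_iff_one]
    apply Ideal.subset_span
    exact ⟨0, Finset.mem_singleton_self 0, by simp⟩
  · have key : ∀ A B : Finset ℕ, A.Nonempty → B.Nonempty →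
        idealOfFinset (D := D) hn A = idealOfFinset (D := D) hn B →
        (A.sup id ≤ B.sup id ∧ (A.sup id = B.sup id → B ⊆ A)) := by
      intro A B hA hB h
      rw [idealOfFinset_eq_span_monomial, idealOfFinset_eq_span_monomial] at h
      have hdom := span_mono_dominate (D := D) hne h
      constructor
      · obtain ⟨b, hb, hsb⟩ := Finset.exists_mem_eq_sup B hB id
        obtain ⟨m', hm', h1, h2⟩ := hdom _ hb
        have hm'le : m' ≤ A.sup id := Finset.le_sup (f := id) hm'
        simp only [id] at hsb
        omega
      · intro hsup m hm
        obtain ⟨m', hm', h1, h2⟩ := hdom _ hm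
        have hm'le : m' ≤ A.sup id := Finset.le_sup (f := id) hm'
        have hmle : m ≤ B.sup id := Finset.le_sup (f := id) hm
        have : m' = m := by omega
        rwa [← this]
    intro A B hA hB h
    have k1 := key A B hA hB h
    have k2 := key B A hB hA h.symm
    have hsup : A.sup id = B.sup id := le_antisymm k1.1 k2.1
    exact Finset.Subset.antisymm (k2.2 hsup.symm) (k1.2 hsup)
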